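/- arXiv:1711.00978 — 3 statements merged into one kernel-verified Lean document; each statement's English description precedes it below -/
import Mathlib

section
/- For every t ≥ 0, every φ ∈ C_b, and all x₁, x₂ ∈ ℝ, one has |T₂(t)φ(x₁) − T₂(t)φ(x₂)| ≤ b·g(x₁ − x₂), where T₂(t)φ(x) = e^{−t} Σ_{k=1}^∞ (t^k/k!) a_k(φ)(x) and g(x) = ∫_ℝ |J(x+z) − J(z)| dz. -/
open MeasureTheory Real Set

/-- Iterated convolutions: `a_0(φ) = φ`, `a_k(φ)(x) = ∫ J(x−y) a_{k−1}(φ)(y) dy`. -/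
noncomputable def ak (J : ℝ → ℝ) : ℕ → (ℝ → ℝ) → ℝ → ℝ
  | 0, φ => φ
  | k + 1, φ => fun x => ∫ y, J (x - y) * ak J k φ y

/-- continuity+bounds by induction -/
lemma ak_prop (J : ℝ → ℝ) (hJ0 : ∀ y, 0 ≤ J y) (hJi : Integrable J)
    (hJ1 : ∫ y, J y = 1) (b : ℝ) (hb : 0 < b)
    (φ : ℝ → ℝ) (hφc : Continuous φ) (hφ : ∀ x, φ x ∈ Set.Icc 0 b) :
    ∀ k, Continuous (ak J k φ) ∧ ∀ x, ak J k φ x ∈ Set.Icc 0 b := by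
  intro k
  induction k with
  | zero => exact ⟨hφc, hφ⟩
  | succ k ih =>
    obtain ⟨hc, hbd⟩ := ih
    set g := ak J k φ with hg
    have hint : ∀ x : ℝ, Integrable (fun y => J (x - y) * g y) := by
      intro x
      have h1 : Integrable (fun y => g y * J (x - y)) :=
        (hJi.comp_sub_left x).bdd_mul hc.aestronglyMeasurable
          (c := b) (Filter.Eventually.of_forall fun y => by
            have := hbd y
            rw [Real.norm_eq_abs, abs_of_nonneg this.1]; exact this.2)
      exact h1.congr (Filter.Eventually.of_forall fun y => mul_comm _ _)
    have hJx : ∀ x : ℝ, (∫ y, J (x - y)) = 1 := fun x => by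
      rw [integral_sub_left_eq_self J volume x]; exact hJ1
    constructor
    · -- continuity via convolution
      have : ak J (k+1) φ = convolution J g (ContinuousLinearMap.mul ℝ ℝ) volume := by
        funext x
        show (∫ y, J (x - y) * g y) = ∫ s, J s * g (x - s)
        rw [← integral_sub_left_eq_self (fun s => J s * g (x - s)) volume x]
        simp [sub_sub_cancel]
      rw [this]
      apply BddAbove.continuous_convolution_right_of_integrable _ _ hJi hc
      refine ⟨b, ?_⟩
      rintro r ⟨y, rfl⟩
      have := hbd y
      show ‖g y‖ ≤ b
      rw [Real.norm_eq_abs, abs_of_nonneg this.1]; exact this.2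
    · intro x
      constructor
      · exact integral_nonneg fun y => mul_nonneg (hJ0 _) (hbd y).1
      · have h2 : (∫ y, J (x - y) * g y) ≤ ∫ y, J (x - y) * b := by
          apply integral_mono (hint x) ((hJi.comp_sub_left x).mul_const b)
          intro y
          exact mul_le_mul_of_nonneg_left (hbd y).2 (hJ0 _)
        calc ak J (k+1) φ x ≤ ∫ y, J (x - y) * b := h2
          _ = (∫ y, J (x - y)) * b := by rw [integral_mul_const]
          _ = b := by rw [hJx x, one_mul]

lemma ak_diff (J : ℝ → ℝ) (hJ0 : ∀ y, 0 ≤ J y) (hJi : Integrable J)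
    (hJ1 : ∫ y, J y = 1) (b : ℝ) (hb : 0 < b)
    (φ : ℝ → ℝ) (hφc : Continuous φ) (hφ : ∀ x, φ x ∈ Set.Icc 0 b)
    (k : ℕ) (x₁ x₂ : ℝ) :
    |ak J (k+1) φ x₁ - ak J (k+1) φ x₂| ≤ b * (∫ z, |J (x₁ - x₂ + z) - J z|) := by
  obtain ⟨hc, hbd⟩ := ak_prop J hJ0 hJi hJ1 b hb φ hφc hφ k
  set g := ak J k φ with hg
  have hint : ∀ x : ℝ, Integrable (fun y => J (x - y) * g y) := by
    intro x
    have h1 : Integrable (fun y => g y * J (x - y)) :=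
      (hJi.comp_sub_left x).bdd_mul hc.aestronglyMeasurable
        (c := b) (Filter.Eventually.of_forall fun y => by
          have := hbd y
          rw [Real.norm_eq_abs, abs_of_nonneg this.1]; exact this.2)
    exact h1.congr (Filter.Eventually.of_forall fun y => mul_comm _ _)
  have hJdiff : Integrable (fun y => |J (x₁ - y) - J (x₂ - y)|) :=
    ((hJi.comp_sub_left x₁).sub (hJi.comp_sub_left x₂)).abs
  have step1 : ak J (k+1) φ x₁ - ak J (k+1) φ x₂
      = ∫ y, (J (x₁ - y) - J (x₂ - y)) * g y := by
    show (∫ y, J (x₁ - y) * g y) - (∫ y, J (x₂ - y) * g y) = _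
    rw [← integral_sub (hint x₁) (hint x₂)]
    congr 1; funext y; ring
  rw [step1]
  have step2 : |∫ y, (J (x₁ - y) - J (x₂ - y)) * g y|
      ≤ ∫ y, |(J (x₁ - y) - J (x₂ - y)) * g y| := by
    simpa only [Real.norm_eq_abs] using norm_integral_le_integral_norm (μ := volume) (fun y => (J (x₁ - y) - J (x₂ - y)) * g y)
  have hint2 : Integrable (fun y => (J (x₁ - y) - J (x₂ - y)) * g y) := by
    have := (hint x₁).sub (hint x₂)
    exact this.congr (Filter.Eventually.of_forall fun y => by simp [Pi.sub_apply]; ring)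
  have step3 : (∫ y, |(J (x₁ - y) - J (x₂ - y)) * g y|)
      ≤ ∫ y, |J (x₁ - y) - J (x₂ - y)| * b := by
    apply integral_mono hint2.abs (hJdiff.mul_const b)
    intro y
    simp only []
    rw [abs_mul]
    apply mul_le_mul_of_nonneg_left _ (abs_nonneg _)
    rw [abs_of_nonneg (hbd y).1]; exact (hbd y).2
  have step4 : (∫ y, |J (x₁ - y) - J (x₂ - y)| * b)
      = (∫ z, |J (x₁ - x₂ + z) - J z|) * b := by
    rw [integral_mul_const]
    congr 1
    rw [← integral_sub_left_eq_self (fun z => |J (x₁ - x₂ + z) - J z|) volume x₂]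
    congr 1; funext y
    have h1 : x₁ - x₂ + (x₂ - y) = x₁ - y := by ring
    simp only [h1]
  calc |∫ y, (J (x₁ - y) - J (x₂ - y)) * g y|
      ≤ ∫ y, |(J (x₁ - y) - J (x₂ - y)) * g y| := step2
    _ ≤ ∫ y, |J (x₁ - y) - J (x₂ - y)| * b := step3
    _ = (∫ z, |J (x₁ - x₂ + z) - J z|) * b := step4
    _ = b * ∫ z, |J (x₁ - x₂ + z) - J z| := mul_comm _ _

/-- `T₂(t)φ(x) = e^{−t} Σ_{k=1}^∞ (t^k/k!) a_k(φ)(x)` (indexed by `k+1` for `k : ℕ`). -/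
noncomputable def T2map (J : ℝ → ℝ) (t : ℝ) (φ : ℝ → ℝ) (x : ℝ) : ℝ :=
  Real.exp (-t) * ∑' k : ℕ, t ^ (k + 1) / (Nat.factorial (k + 1)) * ak J (k + 1) φ x

/-- `g(x) = ∫ |J(x+z) − J(z)| dz`. -/
noncomputable def gJ (J : ℝ → ℝ) (x : ℝ) : ℝ := ∫ z, |J (x + z) - J z|

set_option maxHeartbeats 1000000 in
/-- for every `t ≥ 0`, `φ ∈ C_b` and `x₁, x₂ ∈ ℝ`,
`|T₂(t)φ(x₁) − T₂(t)φ(x₂)| ≤ b·g(x₁ − x₂)`. -/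
theorem stmt_6 (J : ℝ → ℝ) (hJ0 : ∀ y, 0 ≤ J y) (hJi : Integrable J)
    (hJ1 : ∫ y, J y = 1) (b : ℝ) (hb : 0 < b)
    (φ : ℝ → ℝ) (hφc : Continuous φ) (hφ : ∀ x, φ x ∈ Set.Icc 0 b)
    (t : ℝ) (ht : 0 ≤ t) (x₁ x₂ : ℝ) :
    |T2map J t φ x₁ - T2map J t φ x₂| ≤ b * gJ J (x₁ - x₂) := by
  set c : ℕ → ℝ := fun k => t ^ (k + 1) / (Nat.factorial (k + 1)) with hcdef
  have hc0 : ∀ k, 0 ≤ c k := fun k =>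
    div_nonneg (pow_nonneg ht _) (Nat.cast_nonneg _)
  have hsc : Summable c := by
    have := Real.summable_pow_div_factorial t
    exact this.comp_injective Nat.succ_injective
  have hG : 0 ≤ gJ J (x₁ - x₂) := integral_nonneg fun z => abs_nonneg _
  have hbd := (ak_prop J hJ0 hJi hJ1 b hb φ hφc hφ)
  -- summability of the series at each point
  have hsum : ∀ x : ℝ, Summable (fun k => c k * ak J (k + 1) φ x) := by
    intro x
    apply Summable.of_nonneg_of_le
      (fun k => mul_nonneg (hc0 k) ((hbd (k+1)).2 x).1)
      (fun k => mul_le_mul_of_nonneg_left ((hbd (k+1)).2 x).2 (hc0 k))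
      (hsc.mul_right b)
  -- pointwise difference bound
  have hdiff : ∀ k, |ak J (k+1) φ x₁ - ak J (k+1) φ x₂| ≤ b * gJ J (x₁ - x₂) := by
    intro k
    have := ak_diff J hJ0 hJi hJ1 b hb φ hφc hφ k x₁ x₂
    exact this
  have key : |(∑' k, c k * ak J (k+1) φ x₁) - ∑' k, c k * ak J (k+1) φ x₂|
      ≤ (∑' k, c k) * (b * gJ J (x₁ - x₂)) := by
    rw [← Summable.tsum_sub (hsum x₁) (hsum x₂)]
    have habs : ∀ k, |c k * ak J (k+1) φ x₁ - c k * ak J (k+1) φ x₂|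
        ≤ c k * (b * gJ J (x₁ - x₂)) := by
      intro k
      rw [← mul_sub, abs_mul, abs_of_nonneg (hc0 k)]
      exact mul_le_mul_of_nonneg_left (hdiff k) (hc0 k)
    have hsabs : Summable (fun k => |c k * ak J (k+1) φ x₁ - c k * ak J (k+1) φ x₂|) :=
      Summable.of_nonneg_of_le (fun k => abs_nonneg _) habs (hsc.mul_right _)
    calc |∑' k, (c k * ak J (k+1) φ x₁ - c k * ak J (k+1) φ x₂)|
        ≤ ∑' k, |c k * ak J (k+1) φ x₁ - c k * ak J (k+1) φ x₂| := by
          have h := norm_tsum_le_tsum_norm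
            (f := fun k => c k * ak J (k+1) φ x₁ - c k * ak J (k+1) φ x₂)
            (by simpa only [Real.norm_eq_abs] using hsabs)
          simpa only [Real.norm_eq_abs] using h
      _ ≤ ∑' k, c k * (b * gJ J (x₁ - x₂)) := Summable.tsum_le_tsum habs hsabs (hsc.mul_right _)
      _ = (∑' k, c k) * (b * gJ J (x₁ - x₂)) := hsc.tsum_mul_right _
  have hcle : (∑' k, c k) ≤ Real.exp t := by
    apply Summable.tsum_le_of_sum_range_le hsc
    intro n
    have h1 : ∑ i ∈ Finset.range n, c i ≤ ∑ i ∈ Finset.range (n+1), t ^ i / (Nat.factorial i) := by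
      rw [Finset.sum_range_succ']
      simp only [pow_zero, Nat.factorial_zero, Nat.cast_one]
      have : (0:ℝ) ≤ 1 / 1 := by norm_num
      linarith [Finset.sum_le_sum (f := c) (g := c) (fun i (_ : i ∈ Finset.range n) => le_refl (c i))]
    exact h1.trans (Real.sum_le_exp_of_nonneg ht _)
  have expand : T2map J t φ x₁ - T2map J t φ x₂
      = Real.exp (-t) * ((∑' k, c k * ak J (k+1) φ x₁) - ∑' k, c k * ak J (k+1) φ x₂) := by
    rw [T2map, T2map, ← mul_sub]
  rw [expand, abs_mul, abs_of_nonneg (Real.exp_nonneg _)]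
  calc Real.exp (-t) * |(∑' k, c k * ak J (k+1) φ x₁) - ∑' k, c k * ak J (k+1) φ x₂|
      ≤ Real.exp (-t) * ((∑' k, c k) * (b * gJ J (x₁ - x₂))) :=
        mul_le_mul_of_nonneg_left key (Real.exp_nonneg _)
    _ ≤ Real.exp (-t) * (Real.exp t * (b * gJ J (x₁ - x₂))) := by
        apply mul_le_mul_of_nonneg_left _ (Real.exp_nonneg _)
        exact mul_le_mul_of_nonneg_right hcle (mul_nonneg hb.le hG)
    _ = b * gJ J (x₁ - x₂) := by
        rw [← mul_assoc, ← Real.exp_add, neg_add_cancel, Real.exp_zero, one_mul]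
end

section
/- (Lemma 1) For each t > 0 and every subset U of C_b, one has α(T(t)U) ≤ e^{−t} α(U), where α denotes the Kuratowski measure of noncompactness in the metric space (C_b, d); that is, the solution map T(t) of the linear equation u_t = J∗u − u is an α-contraction with contraction coefficient e^{−t}. -/
open MeasureTheory Real Set
open scoped ENNReal

/-- The linear solution map `T(t)φ(x) = e^{−t} Σ_{k=0}^∞ (t^k/k!) a_k(φ)(x)`. -/
noncomputable def Tmap (J : ℝ → ℝ) (t : ℝ) (φ : ℝ → ℝ) (x : ℝ) : ℝ :=
  Real.exp (-t) * ∑' k : ℕ, t ^ k / (Nat.factorial k) * ak J k φ x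

/-- The metric `d(φ,ψ) = Σ_{k=1}^∞ 2^{-k} max_{-k ≤ x ≤ k} |φ(x) − ψ(x)|`
(indexed here by `k+1` for `k : ℕ`). -/
noncomputable def dCb (φ ψ : ℝ → ℝ) : ℝ :=
  ∑' k : ℕ, (1 / 2 : ℝ) ^ (k + 1) *
    (⨆ x : Set.Icc (-((k : ℝ) + 1)) ((k : ℝ) + 1), |φ ↑x - ψ ↑x|)

/-- The Kuratowski measure of noncompactness of a set `A` relative to a distance
function `d`: the infimum (in `ℝ≥0∞`, so `∞` if no such cover exists) of all `ε`
such that `A` admits a finite cover by sets of `d`-diameter at most `ε`. -/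
noncomputable def kuratD {X : Type*} (d : X → X → ℝ) (A : Set X) : ℝ≥0∞ :=
  sInf {ε : ℝ≥0∞ | ∃ (n : ℕ) (C : Fin n → Set X), A ⊆ ⋃ i, C i ∧
    ∀ i, ∀ x ∈ C i, ∀ y ∈ C i, ENNReal.ofReal (d x y) ≤ ε}

section AK
variable {J : ℝ → ℝ} {b : ℝ}

lemma conv_integrable (hJi : Integrable J) {g : ℝ → ℝ} (hc : Continuous g)
    (hm : ∀ x, g x ∈ Set.Icc 0 b) (x : ℝ) :
    Integrable (fun y => J (x - y) * g y) := by
  have h := (hJi.comp_sub_left x).bdd_mul hc.aestronglyMeasurable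
    (Filter.Eventually.of_forall fun y => by
      rw [Real.norm_eq_abs, abs_of_nonneg (hm y).1]; exact (hm y).2)
  simpa [mul_comm] using h

lemma conv_mem (hJ0 : ∀ y, 0 ≤ J y) (hJi : Integrable J) (hJ1 : ∫ y, J y = 1)
    (hb : 0 ≤ b) {g : ℝ → ℝ} (hc : Continuous g)
    (hm : ∀ x, g x ∈ Set.Icc 0 b) (x : ℝ) :
    (∫ y, J (x - y) * g y) ∈ Set.Icc 0 b := by
  constructor
  · exact integral_nonneg fun y => mul_nonneg (hJ0 _) (hm y).1
  · have h1 : (∫ y, J (x - y) * g y) ≤ ∫ y, J (x - y) * b := by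
      refine integral_mono (conv_integrable hJi hc hm x)
        ((hJi.comp_sub_left x).mul_const b) fun y =>
        mul_le_mul_of_nonneg_left (hm y).2 (hJ0 _)
    have h2 : (∫ y, J (x - y) * b) = b := by
      rw [integral_mul_const, integral_sub_left_eq_self J volume x, hJ1, one_mul]
    linarith

lemma conv_continuous (hJi : Integrable J) {g : ℝ → ℝ} (hc : Continuous g)
    (hm : ∀ x, g x ∈ Set.Icc 0 b) :
    Continuous (fun x => ∫ y, J (x - y) * g y) := by
  have hbd : BddAbove (Set.range fun x => ‖g x‖) := by
    refine ⟨b, ?_⟩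
    rintro _ ⟨x, rfl⟩
    simp only [Real.norm_eq_abs, abs_of_nonneg (hm x).1]
    exact (hm x).2
  have hconv := hbd.continuous_convolution_right_of_integrable
    (ContinuousLinearMap.mul ℝ ℝ) hJi hc (μ := volume)
  have : (fun x => ∫ y, J (x - y) * g y) = convolution J g (ContinuousLinearMap.mul ℝ ℝ) volume := by
    funext x
    rw [convolution_def]
    have := integral_sub_left_eq_self (fun y => J y * g (x - y)) volume x
    simp only [sub_sub_cancel] at this
    simp only [ContinuousLinearMap.mul_apply']
    exact this
  rw [this]
  exact hconv

lemma ak_cont_mem (hJ0 : ∀ y, 0 ≤ J y) (hJi : Integrable J) (hJ1 : ∫ y, J y = 1)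
    (hb : 0 ≤ b) {φ : ℝ → ℝ} (hφc : Continuous φ) (hφ : ∀ x, φ x ∈ Set.Icc 0 b) :
    ∀ k, Continuous (ak J k φ) ∧ ∀ x, ak J k φ x ∈ Set.Icc 0 b := by
  intro k
  induction k with
  | zero => exact ⟨hφc, hφ⟩
  | succ n ih =>
    exact ⟨conv_continuous hJi ih.1 ih.2,
      fun x => conv_mem hJ0 hJi hJ1 hb ih.1 ih.2 x⟩

end AK

noncomputable def GG (J : ℝ → ℝ) (t : ℝ) (φ : ℝ → ℝ) (x : ℝ) : ℝ :=
  Real.exp (-t) * ∑' k : ℕ, t ^ (k + 1) / (Nat.factorial (k + 1)) * ak J (k + 1) φ x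

section TM
variable {J : ℝ → ℝ} {b t : ℝ}

lemma exp_tsum (t : ℝ) : ∑' k : ℕ, t ^ k / (Nat.factorial k : ℝ) = Real.exp t := by
  rw [Real.exp_eq_exp_ℝ, NormedSpace.exp_eq_tsum_div]

lemma summable_shift (t : ℝ) :
    Summable (fun k : ℕ => t ^ (k + 1) / (Nat.factorial (k + 1) : ℝ)) :=
  (Real.summable_pow_div_factorial t).comp_injective Nat.succ_injective

lemma tsum_shift (t : ℝ) :
    ∑' k : ℕ, t ^ (k + 1) / (Nat.factorial (k + 1) : ℝ) = Real.exp t - 1 := by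
  have h := Summable.tsum_eq_zero_add (Real.summable_pow_div_factorial t)
  rw [exp_tsum] at h
  simp only [pow_zero, Nat.factorial_zero, Nat.cast_one, div_one] at h
  linarith

variable (ht : 0 ≤ t) (hb : 0 ≤ b)
  (hJ0 : ∀ y, 0 ≤ J y) (hJi : Integrable J) (hJ1 : ∫ y, J y = 1)
  {φ : ℝ → ℝ} (hφc : Continuous φ) (hφ : ∀ x, φ x ∈ Set.Icc 0 b)

include ht hb hJ0 hJi hJ1 hφc hφ

lemma summable_ak (x : ℝ) :
    Summable (fun k : ℕ => t ^ k / (Nat.factorial k : ℝ) * ak J k φ x) := by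
  refine Summable.of_nonneg_of_le (fun k => ?_) (fun k => ?_)
    ((Real.summable_pow_div_factorial t).mul_right b)
  · exact mul_nonneg (div_nonneg (pow_nonneg ht k) (Nat.cast_nonneg _))
      ((ak_cont_mem hJ0 hJi hJ1 hb hφc hφ k).2 x).1
  · exact mul_le_mul_of_nonneg_left ((ak_cont_mem hJ0 hJi hJ1 hb hφc hφ k).2 x).2
      (div_nonneg (pow_nonneg ht k) (Nat.cast_nonneg _))

lemma summable_ak_shift (x : ℝ) :
    Summable (fun k : ℕ => t ^ (k + 1) / (Nat.factorial (k + 1) : ℝ) * ak J (k + 1) φ x) :=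
  (summable_ak ht hb hJ0 hJi hJ1 hφc hφ x).comp_injective Nat.succ_injective

lemma tmap_split (x : ℝ) : Tmap J t φ x = Real.exp (-t) * φ x + GG J t φ x := by
  unfold Tmap GG
  rw [Summable.tsum_eq_zero_add (summable_ak ht hb hJ0 hJi hJ1 hφc hφ x)]
  show Real.exp (-t) * (t ^ 0 / (Nat.factorial 0 : ℝ) * ak J 0 φ x + _) = _
  simp only [pow_zero, Nat.factorial_zero, Nat.cast_one, div_one, one_mul]
  rw [mul_add]
  rfl

lemma GG_bounds (x : ℝ) : GG J t φ x ∈ Set.Icc 0 ((1 - Real.exp (-t)) * b) := by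
  have hnn : ∀ k : ℕ, 0 ≤ t ^ (k + 1) / (Nat.factorial (k + 1) : ℝ) :=
    fun k => div_nonneg (pow_nonneg ht _) (Nat.cast_nonneg _)
  constructor
  · exact mul_nonneg (Real.exp_nonneg _) (tsum_nonneg fun k =>
      mul_nonneg (hnn k) ((ak_cont_mem hJ0 hJi hJ1 hb hφc hφ (k + 1)).2 x).1)
  · have h1 : (∑' k : ℕ, t ^ (k + 1) / (Nat.factorial (k + 1) : ℝ) * ak J (k + 1) φ x)
        ≤ ∑' k : ℕ, t ^ (k + 1) / (Nat.factorial (k + 1) : ℝ) * b := by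
      refine Summable.tsum_le_tsum (fun k => ?_)
        (summable_ak_shift ht hb hJ0 hJi hJ1 hφc hφ x) ((summable_shift t).mul_right b)
      exact mul_le_mul_of_nonneg_left ((ak_cont_mem hJ0 hJi hJ1 hb hφc hφ (k + 1)).2 x).2 (hnn k)
    rw [tsum_mul_right, tsum_shift] at h1
    have h2 : GG J t φ x ≤ Real.exp (-t) * ((Real.exp t - 1) * b) := by
      unfold GG
      exact mul_le_mul_of_nonneg_left h1 (Real.exp_nonneg _)
    have h3 : Real.exp (-t) * ((Real.exp t - 1) * b) = (1 - Real.exp (-t)) * b := by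
      rw [Real.exp_neg]
      field_simp
    linarith

lemma GG_mem (x : ℝ) : GG J t φ x ∈ Set.Icc 0 b := by
  have h := GG_bounds ht hb hJ0 hJi hJ1 hφc hφ x
  have he : 0 < Real.exp (-t) := Real.exp_pos _
  have he1 : Real.exp (-t) ≤ 1 := Real.exp_le_one_iff.mpr (by linarith)
  refine ⟨h.1, h.2.trans ?_⟩
  nlinarith

lemma Tmap_mem (x : ℝ) : Tmap J t φ x ∈ Set.Icc 0 b := by
  rw [tmap_split ht hb hJ0 hJi hJ1 hφc hφ x]
  have h := GG_bounds ht hb hJ0 hJi hJ1 hφc hφ x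
  have he : 0 < Real.exp (-t) := Real.exp_pos _
  have he1 : Real.exp (-t) ≤ 1 := Real.exp_le_one_iff.mpr (by linarith)
  have hφx := hφ x
  constructor
  · have := hφx.1
    nlinarith [h.1]
  · nlinarith [hφx.2, h.2]

lemma GG_cont : Continuous (GG J t φ) := by
  unfold GG
  refine continuous_const.mul (continuous_tsum (fun k => ?_)
    ((summable_shift t).mul_right b) (fun k x => ?_))
  · exact continuous_const.mul (ak_cont_mem hJ0 hJi hJ1 hb hφc hφ (k + 1)).1
  · rw [Real.norm_eq_abs, abs_mul, abs_of_nonneg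
      (div_nonneg (pow_nonneg ht _) (Nat.cast_nonneg _)), abs_of_nonneg
      ((ak_cont_mem hJ0 hJi hJ1 hb hφc hφ (k + 1)).2 x).1]
    exact mul_le_mul_of_nonneg_left ((ak_cont_mem hJ0 hJi hJ1 hb hφc hφ (k + 1)).2 x).2
      (div_nonneg (pow_nonneg ht _) (Nat.cast_nonneg _))

end TM

noncomputable def W (J : ℝ → ℝ) (s : ℝ) : ℝ := ∫ y, |J (y + s) - J y|

section EQC
variable {J : ℝ → ℝ} {b t : ℝ}

lemma W_nonneg (J : ℝ → ℝ) (s : ℝ) : 0 ≤ W J s :=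
  integral_nonneg fun y => abs_nonneg _

lemma trans_eq (J : ℝ → ℝ) (x x' : ℝ) :
    ∫ y, |J (x - y) - J (x' - y)| = W J (x - x') := by
  have h := integral_sub_left_eq_self (fun y => |J (y + (x - x')) - J y|) volume x'
  have e : ∀ y : ℝ, x' - y + (x - x') = x - y := fun y => by ring
  simp only [e] at h
  exact h

lemma ak_equicont (hb : 0 ≤ b)
    (hJ0 : ∀ y, 0 ≤ J y) (hJi : Integrable J) (hJ1 : ∫ y, J y = 1)
    {φ : ℝ → ℝ} (hφc : Continuous φ) (hφ : ∀ x, φ x ∈ Set.Icc 0 b)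
    (k : ℕ) (x x' : ℝ) :
    |ak J (k + 1) φ x - ak J (k + 1) φ x'| ≤ b * W J (x - x') := by
  obtain ⟨hc, hm⟩ := ak_cont_mem hJ0 hJi hJ1 hb hφc hφ k
  have hix := conv_integrable hJi hc hm x
  have hix' := conv_integrable hJi hc hm x'
  have h1 : ak J (k + 1) φ x - ak J (k + 1) φ x'
      = ∫ y, (J (x - y) - J (x' - y)) * ak J k φ y := by
    show (∫ y, J (x - y) * ak J k φ y) - (∫ y, J (x' - y) * ak J k φ y) = _
    rw [← integral_sub hix hix']
    congr 1; funext y; ring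
  rw [h1]
  have h0 : Integrable (fun y => (J (x - y) - J (x' - y)) * ak J k φ y) := by
    exact (hix.sub hix').congr (Filter.Eventually.of_forall fun y => by simp [sub_mul])
  calc |∫ y, (J (x - y) - J (x' - y)) * ak J k φ y|
      ≤ ∫ y, |(J (x - y) - J (x' - y)) * ak J k φ y| := by
        simpa only [Real.norm_eq_abs] using
          norm_integral_le_integral_norm (μ := volume) (fun y => (J (x - y) - J (x' - y)) * ak J k φ y)
    _ ≤ ∫ y, |J (x - y) - J (x' - y)| * b := by
        refine integral_mono h0.abs
          (((hJi.comp_sub_left x).sub (hJi.comp_sub_left x')).abs.mul_const b) fun y => ?_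
        rw [abs_mul]
        refine mul_le_mul_of_nonneg_left ?_ (abs_nonneg _)
        rw [abs_of_nonneg (hm y).1]; exact (hm y).2
    _ = b * W J (x - x') := by
        rw [integral_mul_const, trans_eq, mul_comm]

lemma GG_equicont (ht : 0 ≤ t) (hb : 0 ≤ b)
    (hJ0 : ∀ y, 0 ≤ J y) (hJi : Integrable J) (hJ1 : ∫ y, J y = 1)
    {φ : ℝ → ℝ} (hφc : Continuous φ) (hφ : ∀ x, φ x ∈ Set.Icc 0 b)
    (x x' : ℝ) :
    |GG J t φ x - GG J t φ x'| ≤ b * W J (x - x') := by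
  have hnn : ∀ k : ℕ, 0 ≤ t ^ (k + 1) / (Nat.factorial (k + 1) : ℝ) :=
    fun k => div_nonneg (pow_nonneg ht _) (Nat.cast_nonneg _)
  have hsx := summable_ak_shift ht hb hJ0 hJi hJ1 hφc hφ x
  have hsx' := summable_ak_shift ht hb hJ0 hJi hJ1 hφc hφ x'
  have he : 0 < Real.exp (-t) := Real.exp_pos _
  have hW := mul_nonneg hb (W_nonneg J (x - x'))
  have h1 : GG J t φ x - GG J t φ x'
      = Real.exp (-t) * ∑' k : ℕ, (t ^ (k + 1) / (Nat.factorial (k + 1) : ℝ) * ak J (k + 1) φ x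
          - t ^ (k + 1) / (Nat.factorial (k + 1) : ℝ) * ak J (k + 1) φ x') := by
    unfold GG
    rw [Summable.tsum_sub hsx hsx', mul_sub]
  rw [h1, abs_mul, abs_of_nonneg he.le]
  have h2 : ‖∑' k : ℕ, (t ^ (k + 1) / (Nat.factorial (k + 1) : ℝ) * ak J (k + 1) φ x
      - t ^ (k + 1) / (Nat.factorial (k + 1) : ℝ) * ak J (k + 1) φ x')‖
      ≤ ∑' k : ℕ, ‖t ^ (k + 1) / (Nat.factorial (k + 1) : ℝ) * ak J (k + 1) φ x
      - t ^ (k + 1) / (Nat.factorial (k + 1) : ℝ) * ak J (k + 1) φ x'‖ :=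
    norm_tsum_le_tsum_norm ((hsx.sub hsx').norm)
  have h3 : ∑' k : ℕ, ‖t ^ (k + 1) / (Nat.factorial (k + 1) : ℝ) * ak J (k + 1) φ x
      - t ^ (k + 1) / (Nat.factorial (k + 1) : ℝ) * ak J (k + 1) φ x'‖
      ≤ ∑' k : ℕ, t ^ (k + 1) / (Nat.factorial (k + 1) : ℝ) * (b * W J (x - x')) := by
    refine Summable.tsum_le_tsum (fun k => ?_) ((hsx.sub hsx').norm)
      ((summable_shift t).mul_right _)
    rw [Real.norm_eq_abs, ← mul_sub, abs_mul, abs_of_nonneg (hnn k)]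
    exact mul_le_mul_of_nonneg_left
      (ak_equicont hb hJ0 hJi hJ1 hφc hφ k x x') (hnn k)
  simp only [Real.norm_eq_abs] at h2 h3
  have h4 : ∑' k : ℕ, t ^ (k + 1) / (Nat.factorial (k + 1) : ℝ) * (b * W J (x - x'))
      = (Real.exp t - 1) * (b * W J (x - x')) := by
    rw [tsum_mul_right, tsum_shift]
  have h5 : Real.exp (-t) * (Real.exp t - 1) ≤ 1 := by
    rw [Real.exp_neg]
    have h6 := Real.exp_pos t
    have h7 : Real.exp t ≥ 1 := Real.one_le_exp ht
    rw [inv_mul_le_iff₀ h6]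
    linarith
  calc Real.exp (-t) * |∑' k : ℕ, (t ^ (k + 1) / (Nat.factorial (k + 1) : ℝ) * ak J (k + 1) φ x
      - t ^ (k + 1) / (Nat.factorial (k + 1) : ℝ) * ak J (k + 1) φ x')|
      ≤ Real.exp (-t) * ((Real.exp t - 1) * (b * W J (x - x'))) := by
        refine mul_le_mul_of_nonneg_left ?_ he.le
        rw [← h4]
        exact h2.trans h3
    _ = (Real.exp (-t) * (Real.exp t - 1)) * (b * W J (x - x')) := by ring
    _ ≤ 1 * (b * W J (x - x')) := mul_le_mul_of_nonneg_right h5 hW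
    _ = b * W J (x - x') := one_mul _

lemma W_small (hJi : Integrable J) {ε : ℝ} (hε : 0 < ε) :
    ∃ δ > 0, ∀ s : ℝ, |s| ≤ δ → W J s ≤ ε := by
  obtain ⟨g, hgsupp, hgL1, hgc, hgi⟩ :=
    hJi.exists_hasCompactSupport_integral_sub_le (show (0:ℝ) < ε/3 by linarith)
  set K := Metric.cthickening 1 (tsupport g) with hK
  have hKc : IsCompact K := hgsupp.cthickening
  obtain ⟨C, hC⟩ := hgsupp.exists_bound_of_continuous hgc
  set M := fun s : ℝ => ∫ y, |g (y + s) - g y| with hM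
  have hMmeas : ∀ s : ℝ, AEStronglyMeasurable (fun y => |g (y + s) - g y|) volume :=
    fun s => (((hgc.comp (continuous_id.add continuous_const)).sub hgc).abs).aestronglyMeasurable
  have hMc : ContinuousAt M 0 := by
    refine continuousAt_of_dominated (bound := Set.indicator K fun _ => 2 * C)
      (Filter.Eventually.of_forall hMmeas)
      ?_ ?_ (Filter.Eventually.of_forall fun y => ?_)
    · filter_upwards [Metric.ball_mem_nhds (0:ℝ) one_pos] with s hs
      filter_upwards with y
      by_cases hy : y ∈ K
      · rw [Set.indicator_of_mem hy]
        rw [Real.norm_eq_abs, abs_abs]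
        calc |g (y + s) - g y| ≤ |g (y + s)| + |g y| := abs_sub _ _
          _ ≤ C + C := by
              have h1 := hC (y + s); have h2 := hC y
              rw [Real.norm_eq_abs] at h1 h2
              linarith
          _ = 2 * C := by ring
      · rw [Set.indicator_of_notMem hy]
        have hy1 : y ∉ tsupport g := fun h => hy (Metric.self_subset_cthickening _ h)
        have hs' : |s| < 1 := by simpa [Real.dist_eq] using hs
        have hy2 : y + s ∉ tsupport g := by
          intro h
          apply hy
          refine Metric.thickening_subset_cthickening 1 _ ?_
          rw [Metric.mem_thickening_iff]
          refine ⟨y + s, h, ?_⟩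
          rw [Real.dist_eq]
          have he2 : y - (y + s) = -s := by ring
          rw [he2, abs_neg]
          exact hs'
        rw [image_eq_zero_of_notMem_tsupport hy1, image_eq_zero_of_notMem_tsupport hy2]
        simp
    · rw [integrable_indicator_iff Metric.isClosed_cthickening.measurableSet]
      exact integrableOn_const hKc.measure_lt_top.ne
    · exact ((hgc.comp (continuous_const.add continuous_id)).sub
        continuous_const).abs.continuousAt
  have hM0 : M 0 = 0 := by simp [hM]
  rw [Metric.continuousAt_iff] at hMc
  obtain ⟨δ, hδ0, hδ⟩ := hMc (ε / 3) (by linarith)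
  refine ⟨min (δ / 2) (1 / 2), by positivity, fun s hs => ?_⟩
  have hs1 : |s| < δ := lt_of_le_of_lt (hs.trans (min_le_left _ _)) (by linarith)
  have hMs : M s ≤ ε / 3 := by
    have h := hδ (show dist s 0 < δ by rw [Real.dist_eq, sub_zero]; exact hs1)
    rw [hM0, Real.dist_eq, sub_zero] at h
    exact ((le_abs_self _).trans h.le)
  have i1 : Integrable (fun y => |J (y + s) - g (y + s)|) := by
    simpa using ((hJi.comp_add_right s).sub (hgi.comp_add_right s)).abs
  have i2 : Integrable (fun y => |g (y + s) - g y|) := by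
    simpa using ((hgi.comp_add_right s).sub hgi).abs
  have i3 : Integrable (fun y => |g y - J y|) := by simpa using (hgi.sub hJi).abs
  have iL : Integrable (fun y => |J (y + s) - J y|) := by
    simpa using ((hJi.comp_add_right s).sub hJi).abs
  have hpt : ∀ y : ℝ, |J (y + s) - J y|
      ≤ |J (y + s) - g (y + s)| + |g (y + s) - g y| + |g y - J y| := by
    intro y
    calc |J (y + s) - J y| ≤ |J (y + s) - g (y + s)| + |g (y + s) - J y| :=
          abs_sub_le _ _ _
      _ ≤ |J (y + s) - g (y + s)| + |g (y + s) - g y| + |g y - J y| := by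
          linarith [abs_sub_le (g (y + s)) (g y) (J y)]
  have i12 : Integrable (fun y => |J (y + s) - g (y + s)| + |g (y + s) - g y|) := by
    exact i1.add i2
  have i123 : Integrable
      (fun y => |J (y + s) - g (y + s)| + |g (y + s) - g y| + |g y - J y|) := by
    exact i12.add i3
  have hW1 : W J s ≤ ∫ y, (|J (y + s) - g (y + s)| + |g (y + s) - g y| + |g y - J y|) :=
    integral_mono iL i123 hpt
  rw [integral_add i12 i3, integral_add i1 i2] at hW1
  have e1 : (∫ y, |J (y + s) - g (y + s)|) = ∫ y, |J y - g y| := by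
    exact integral_add_right_eq_self (μ := volume) (fun y => |J y - g y|) s
  have e2 : (∫ y, |J y - g y|) ≤ ε / 3 := by
    simpa [Real.norm_eq_abs] using hgL1
  have e3 : (∫ y, |g y - J y|) = ∫ y, |J y - g y| := by
    have h : (fun y => |g y - J y|) = fun y => |J y - g y| :=
      funext fun y => abs_sub_comm _ _
    rw [h]
  rw [e1, e3] at hW1
  have : M s = ∫ y, |g (y + s) - g y| := rfl
  linarith [hW1]

end EQC

section DCB

noncomputable def SS (k : ℕ) (φ ψ : ℝ → ℝ) : ℝ :=
  ⨆ x : Set.Icc (-((k : ℝ) + 1)) ((k : ℝ) + 1), |φ ↑x - ψ ↑x|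

lemma dCb_eq (φ ψ : ℝ → ℝ) : dCb φ ψ = ∑' k : ℕ, (1 / 2 : ℝ) ^ (k + 1) * SS k φ ψ := rfl

instance iccNE (k : ℕ) : Nonempty (Set.Icc (-((k : ℝ) + 1)) ((k : ℝ) + 1)) := by
  refine ⟨⟨0, ?_, ?_⟩⟩
  · have : (0:ℝ) ≤ (k:ℝ) + 1 := by positivity
    linarith
  · positivity

lemma SS_nonneg (k : ℕ) (φ ψ : ℝ → ℝ) : 0 ≤ SS k φ ψ :=
  iSup_nonneg fun x => abs_nonneg _

lemma SS_bddAbove (k : ℕ) {φ ψ : ℝ → ℝ} {M : ℝ} (hM : ∀ x, |φ x - ψ x| ≤ M) :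
    BddAbove (Set.range fun x : Set.Icc (-((k : ℝ) + 1)) ((k : ℝ) + 1) => |φ ↑x - ψ ↑x|) := by
  refine ⟨M, ?_⟩
  rintro _ ⟨x, rfl⟩
  exact hM x

lemma SS_le (k : ℕ) {φ ψ : ℝ → ℝ} {M : ℝ} (hM0 : 0 ≤ M)
    (h : ∀ x : ℝ, x ∈ Set.Icc (-((k : ℝ) + 1)) ((k : ℝ) + 1) → |φ x - ψ x| ≤ M) :
    SS k φ ψ ≤ M :=
  Real.iSup_le (fun x => h x x.2) hM0

lemma le_SS (k : ℕ) {φ ψ : ℝ → ℝ} {M : ℝ} (hM : ∀ x, |φ x - ψ x| ≤ M)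
    {x : ℝ} (hx : x ∈ Set.Icc (-((k : ℝ) + 1)) ((k : ℝ) + 1)) :
    |φ x - ψ x| ≤ SS k φ ψ :=
  le_ciSup (SS_bddAbove k hM) (⟨x, hx⟩ : Set.Icc (-((k : ℝ) + 1)) ((k : ℝ) + 1))

lemma summable_wgeom (M : ℝ) : Summable (fun k : ℕ => (1 / 2 : ℝ) ^ (k + 1) * M) := by
  have h : Summable (fun k : ℕ => (1 / 2 : ℝ) ^ k) :=
    summable_geometric_of_lt_one (by norm_num) (by norm_num)
  have := (h.mul_right M).mul_left (1 / 2 : ℝ)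
  refine this.congr fun k => ?_
  ring

lemma tsum_wgeom : ∑' k : ℕ, (1 / 2 : ℝ) ^ (k + 1) = 1 := by
  have h := tsum_geometric_two' 1
  refine Eq.trans ?_ h
  congr 1
  funext n
  rw [div_pow, one_pow, pow_succ]
  ring

lemma summable_SS {φ ψ : ℝ → ℝ} {M : ℝ} (hM : ∀ x, |φ x - ψ x| ≤ M) :
    Summable (fun k : ℕ => (1 / 2 : ℝ) ^ (k + 1) * SS k φ ψ) := by
  have hM0 : 0 ≤ M := (abs_nonneg _).trans (hM 0)
  refine Summable.of_nonneg_of_le (fun k => ?_) (fun k => ?_) (summable_wgeom M)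
  · exact mul_nonneg (by positivity) (SS_nonneg k φ ψ)
  · exact mul_le_mul_of_nonneg_left (SS_le k hM0 fun x _ => hM x) (by positivity)

lemma dCb_nonneg (φ ψ : ℝ → ℝ) : 0 ≤ dCb φ ψ :=
  tsum_nonneg fun k => mul_nonneg (by positivity) (SS_nonneg k φ ψ)

/-- If two functions are uniformly close on `[-N, N]` and globally `M`-close,
then `dCb` is at most `η + M * (1/2)^N`. -/
lemma dCb_tail (N : ℕ) {g g' : ℝ → ℝ} {η M : ℝ} (hη : 0 ≤ η) (hM0 : 0 ≤ M)
    (hloc : ∀ x : ℝ, x ∈ Set.Icc (-(N : ℝ)) (N : ℝ) → |g x - g' x| ≤ η)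
    (hglob : ∀ x, |g x - g' x| ≤ M) :
    dCb g g' ≤ η + M * (1 / 2) ^ N := by
  have hsum := summable_SS (φ := g) (ψ := g') hglob
  rw [dCb_eq, ← Summable.sum_add_tsum_nat_add N hsum]
  have h1 : (∑ i ∈ Finset.range N, (1 / 2 : ℝ) ^ (i + 1) * SS i g g') ≤ η := by
    calc (∑ i ∈ Finset.range N, (1 / 2 : ℝ) ^ (i + 1) * SS i g g')
        ≤ ∑ i ∈ Finset.range N, (1 / 2 : ℝ) ^ (i + 1) * η := by
          refine Finset.sum_le_sum fun i hi => ?_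
          refine mul_le_mul_of_nonneg_left ?_ (by positivity)
          refine SS_le i hη fun x hx => ?_
          refine hloc x ⟨?_, ?_⟩
          · have : ((i : ℝ) + 1) ≤ (N : ℝ) := by
              have := Finset.mem_range.mp hi
              exact_mod_cast Nat.succ_le_of_lt this
            have := hx.1
            linarith
          · have : ((i : ℝ) + 1) ≤ (N : ℝ) := by
              have := Finset.mem_range.mp hi
              exact_mod_cast Nat.succ_le_of_lt this
            have := hx.2
            linarith
      _ = (∑ i ∈ Finset.range N, (1 / 2 : ℝ) ^ (i + 1)) * η := by
          rw [Finset.sum_mul]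
      _ ≤ 1 * η := by
          refine mul_le_mul_of_nonneg_right ?_ hη
          have hs1 : Summable (fun k : ℕ => (1 / 2 : ℝ) ^ (k + 1)) := by
            simpa using summable_wgeom (1:ℝ)
          have h := Summable.sum_le_tsum (Finset.range N) (fun i _ => by positivity) hs1
          rwa [tsum_wgeom] at h
      _ = η := one_mul η
  have h2 : (∑' k : ℕ, (1 / 2 : ℝ) ^ (k + N + 1) * SS (k + N) g g') ≤ M * (1 / 2) ^ N := by
    calc (∑' k : ℕ, (1 / 2 : ℝ) ^ (k + N + 1) * SS (k + N) g g')
        ≤ ∑' k : ℕ, (1 / 2 : ℝ) ^ (k + N + 1) * M := by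
          refine Summable.tsum_le_tsum (fun k => mul_le_mul_of_nonneg_left
            (SS_le _ hM0 fun x _ => hglob x) (by positivity))
            ((summable_nat_add_iff N).mpr hsum) ?_
          have := (summable_wgeom M).comp_injective (add_left_injective N)
          exact this.congr fun k => rfl
      _ = (1 / 2 : ℝ) ^ N * M * ∑' k : ℕ, (1 / 2 : ℝ) ^ (k + 1) := by
          rw [← tsum_mul_left]
          congr 1
          funext k
          ring
      _ = M * (1 / 2) ^ N := by rw [tsum_wgeom]; ring
  linarith

end DCB

section NET
variable {J : ℝ → ℝ} {b t : ℝ}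

lemma abs_diff_le_of_mem_Icc {u v M : ℝ} (hu : u ∈ Set.Icc 0 M) (hv : v ∈ Set.Icc 0 M) :
    |u - v| ≤ M := by
  rw [abs_le]
  constructor
  · have := hu.1; have := hv.2; linarith
  · have := hu.2; have := hv.1; linarith

lemma dCb_split (ht : 0 ≤ t) (hb : 0 ≤ b)
    (hJ0 : ∀ y, 0 ≤ J y) (hJi : Integrable J) (hJ1 : ∫ y, J y = 1)
    {φ ψ : ℝ → ℝ} (hφc : Continuous φ) (hφ : ∀ x, φ x ∈ Set.Icc 0 b)
    (hψc : Continuous ψ) (hψ : ∀ x, ψ x ∈ Set.Icc 0 b) :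
    dCb (Tmap J t φ) (Tmap J t ψ)
      ≤ Real.exp (-t) * dCb φ ψ + dCb (GG J t φ) (GG J t ψ) := by
  set c := Real.exp (-t) with hc
  have hc0 : 0 < c := Real.exp_pos _
  have hbφψ : ∀ x, |φ x - ψ x| ≤ b := fun x => abs_diff_le_of_mem_Icc (hφ x) (hψ x)
  have hbG : ∀ x, |GG J t φ x - GG J t ψ x| ≤ b := fun x =>
    abs_diff_le_of_mem_Icc (GG_mem ht hb hJ0 hJi hJ1 hφc hφ x)
      (GG_mem ht hb hJ0 hJi hJ1 hψc hψ x)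
  have hbT : ∀ x, |Tmap J t φ x - Tmap J t ψ x| ≤ b := fun x =>
    abs_diff_le_of_mem_Icc (Tmap_mem ht hb hJ0 hJi hJ1 hφc hφ x)
      (Tmap_mem ht hb hJ0 hJi hJ1 hψc hψ x)
  have hpt : ∀ x, |Tmap J t φ x - Tmap J t ψ x|
      ≤ c * |φ x - ψ x| + |GG J t φ x - GG J t ψ x| := by
    intro x
    rw [tmap_split ht hb hJ0 hJi hJ1 hφc hφ x, tmap_split ht hb hJ0 hJi hJ1 hψc hψ x]
    have he : c * φ x + GG J t φ x - (c * ψ x + GG J t ψ x)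
        = c * (φ x - ψ x) + (GG J t φ x - GG J t ψ x) := by ring
    rw [he]
    calc |c * (φ x - ψ x) + (GG J t φ x - GG J t ψ x)|
        ≤ |c * (φ x - ψ x)| + |GG J t φ x - GG J t ψ x| := abs_add_le _ _
      _ = c * |φ x - ψ x| + |GG J t φ x - GG J t ψ x| := by
          rw [abs_mul, abs_of_nonneg hc0.le]
  have hSS : ∀ k : ℕ, SS k (Tmap J t φ) (Tmap J t ψ)
      ≤ c * SS k φ ψ + SS k (GG J t φ) (GG J t ψ) := by
    intro k
    refine SS_le k ?_ fun x hx => ?_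
    · exact add_nonneg (mul_nonneg hc0.le (SS_nonneg _ _ _)) (SS_nonneg _ _ _)
    · refine (hpt x).trans (add_le_add ?_ ?_)
      · exact mul_le_mul_of_nonneg_left (le_SS k hbφψ hx) hc0.le
      · exact le_SS k hbG hx
  have s1 := summable_SS (φ := φ) (ψ := ψ) hbφψ
  have s2 := summable_SS (φ := GG J t φ) (ψ := GG J t ψ) hbG
  have sT := summable_SS (φ := Tmap J t φ) (ψ := Tmap J t ψ) hbT
  have hsumR : Summable (fun k : ℕ =>
      c * ((1 / 2 : ℝ) ^ (k + 1) * SS k φ ψ)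
        + (1 / 2 : ℝ) ^ (k + 1) * SS k (GG J t φ) (GG J t ψ)) :=
    (s1.mul_left c).add s2
  calc dCb (Tmap J t φ) (Tmap J t ψ)
      = ∑' k : ℕ, (1 / 2 : ℝ) ^ (k + 1) * SS k (Tmap J t φ) (Tmap J t ψ) := dCb_eq _ _
    _ ≤ ∑' k : ℕ, (c * ((1 / 2 : ℝ) ^ (k + 1) * SS k φ ψ)
        + (1 / 2 : ℝ) ^ (k + 1) * SS k (GG J t φ) (GG J t ψ)) := by
        refine Summable.tsum_le_tsum (fun k => ?_) sT hsumR
        have h := mul_le_mul_of_nonneg_left (hSS k)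
          (show (0:ℝ) ≤ (1 / 2 : ℝ) ^ (k + 1) by positivity)
        calc (1 / 2 : ℝ) ^ (k + 1) * SS k (Tmap J t φ) (Tmap J t ψ)
            ≤ (1 / 2 : ℝ) ^ (k + 1) * (c * SS k φ ψ + SS k (GG J t φ) (GG J t ψ)) := h
          _ = c * ((1 / 2 : ℝ) ^ (k + 1) * SS k φ ψ)
              + (1 / 2 : ℝ) ^ (k + 1) * SS k (GG J t φ) (GG J t ψ) := by ring
    _ = c * dCb φ ψ + dCb (GG J t φ) (GG J t ψ) := by
        rw [Summable.tsum_add (s1.mul_left c) s2, tsum_mul_left, dCb_eq, dCb_eq]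

lemma grid_approx {δ0 L r : ℝ} (hδ0 : 0 < δ0) (hr0 : 0 ≤ r) (hrL : r ≤ L) :
    ∃ j : Fin (⌈L / δ0⌉₊ + 1), |r - (j : ℕ) * δ0| ≤ δ0 := by
  have hfl : ((⌊r / δ0⌋₊ : ℕ) : ℝ) ≤ r / δ0 := Nat.floor_le (by positivity)
  have hfu : r / δ0 < (⌊r / δ0⌋₊ : ℕ) + 1 := Nat.lt_floor_add_one _
  have hle : ⌊r / δ0⌋₊ ≤ ⌈L / δ0⌉₊ := by
    refine le_trans (Nat.floor_mono ?_) (Nat.floor_le_ceil _)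
    gcongr
  refine ⟨⟨⌊r / δ0⌋₊, Nat.lt_succ_of_le hle⟩, ?_⟩
  have h1 : ((⌊r / δ0⌋₊ : ℕ) : ℝ) * δ0 ≤ r := by
    rw [← le_div_iff₀ hδ0]; exact hfl
  have h2 : r < (((⌊r / δ0⌋₊ : ℕ) : ℝ) + 1) * δ0 := by
    rw [← div_lt_iff₀ hδ0]; exact hfu
  rw [abs_le]
  constructor <;> simp only [] <;> nlinarith

lemma GG_net (hJ0 : ∀ y, 0 ≤ J y) (hJi : Integrable J) (hJ1 : ∫ y, J y = 1)
    (hb : 0 < b) (ht : 0 ≤ t) (U : Set (ℝ → ℝ))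
    (hU : ∀ φ ∈ U, Continuous φ ∧ ∀ x, φ x ∈ Set.Icc 0 b)
    {δ : ℝ} (hδ : 0 < δ) :
    ∃ (ι : Type) (_ : Fintype ι) (B : ι → Set (ℝ → ℝ)),
      (∀ φ ∈ U, ∃ i, GG J t φ ∈ B i) ∧
      (∀ i, ∀ g ∈ B i, ∀ g' ∈ B i, dCb g g' ≤ δ) := by
  set ε1 := δ / 8 with hε1
  have hε1pos : 0 < ε1 := by positivity
  -- choose N with 2b * (1/2)^N ≤ δ/2
  obtain ⟨N, hN⟩ := exists_pow_lt_of_lt_one (show (0:ℝ) < δ / (4 * b) by positivity)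
    (show (1/2 : ℝ) < 1 by norm_num)
  have hNb : 2 * b * (1 / 2 : ℝ) ^ N ≤ δ / 2 := by
    have h := mul_le_mul_of_nonneg_left hN.le (show (0:ℝ) ≤ 2 * b by linarith)
    calc 2 * b * (1 / 2 : ℝ) ^ N ≤ 2 * b * (δ / (4 * b)) := h
      _ = δ / 2 := by field_simp; ring
  -- choose δ0 from W_small
  obtain ⟨δ0, hδ0pos, hδ0⟩ := W_small hJi (show (0:ℝ) < ε1 / b by positivity)
  set m0 := ⌈(2 * (N : ℝ)) / δ0⌉₊ with hm0
  set m1 := ⌈b / ε1⌉₊ with hm1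
  set p : Fin (m0 + 1) → ℝ := fun j => (j : ℕ) * δ0 - N with hp
  set v : Fin (m1 + 1) → ℝ := fun i => (i : ℕ) * ε1 with hv
  refine ⟨Fin (m0 + 1) → Fin (m1 + 1), inferInstance,
    fun σ => {g | (∃ φ ∈ U, Continuous φ ∧ (∀ x, φ x ∈ Set.Icc 0 b) ∧ g = GG J t φ)
      ∧ ∀ j, |g (p j) - v (σ j)| ≤ ε1}, ?_, ?_⟩
  · intro φ hφ
    obtain ⟨hφc, hφb⟩ := hU φ hφ
    have hval : ∀ j : Fin (m0 + 1), ∃ i : Fin (m1 + 1), |GG J t φ (p j) - v i| ≤ ε1 := by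
      intro j
      have hmem := GG_mem ht hb.le hJ0 hJi hJ1 hφc hφb (p j)
      obtain ⟨i, hi⟩ := grid_approx hε1pos hmem.1 hmem.2
      exact ⟨i, hi⟩
    choose σ hσ using hval
    exact ⟨σ, ⟨φ, hφ, hφc, hφb, rfl⟩, hσ⟩
  · rintro σ g ⟨⟨φ, hφU, hφc, hφb, rfl⟩, hgσ⟩ g' ⟨⟨ψ, hψU, hψc, hψb, rfl⟩, hg'σ⟩
    have hglob : ∀ x, |GG J t φ x - GG J t ψ x| ≤ 2 * b := by
      intro x
      have h := abs_diff_le_of_mem_Icc (GG_mem ht hb.le hJ0 hJi hJ1 hφc hφb x)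
        (GG_mem ht hb.le hJ0 hJi hJ1 hψc hψb x)
      linarith
    have hloc : ∀ x : ℝ, x ∈ Set.Icc (-(N : ℝ)) (N : ℝ)
        → |GG J t φ x - GG J t ψ x| ≤ δ / 2 := by
      intro x hx
      -- find grid point
      have hr0 : 0 ≤ x + N := by have := hx.1; linarith
      have hrL : x + N ≤ 2 * (N : ℝ) := by have := hx.2; linarith
      obtain ⟨j, hj⟩ := grid_approx hδ0pos hr0 hrL
      have hjx : |x - p j| ≤ δ0 := by
        have : x - p j = x + N - (j : ℕ) * δ0 := by rw [hp]; ring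
        rw [this]
        exact hj
      have hWb : b * W J (x - p j) ≤ ε1 := by
        have h := hδ0 (x - p j) hjx
        calc b * W J (x - p j) ≤ b * (ε1 / b) := by
              exact mul_le_mul_of_nonneg_left h hb.le
          _ = ε1 := by field_simp
      have e1 : |GG J t φ x - GG J t φ (p j)| ≤ ε1 :=
        (GG_equicont ht hb.le hJ0 hJi hJ1 hφc hφb x (p j)).trans hWb
      have e2 : |GG J t ψ x - GG J t ψ (p j)| ≤ ε1 :=
        (GG_equicont ht hb.le hJ0 hJi hJ1 hψc hψb x (p j)).trans hWb
      have e3 := hgσ j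
      have e4 := hg'σ j
      have habs : ∀ a c : ℝ, |a - c| ≤ ε1 → a - c ≤ ε1 ∧ c - a ≤ ε1 := by
        intro a c h
        rw [abs_le] at h
        constructor <;> linarith [h.1, h.2]
      rw [abs_le]
      obtain ⟨e1a, e1b⟩ := habs _ _ e1
      obtain ⟨e2a, e2b⟩ := habs _ _ e2
      obtain ⟨e3a, e3b⟩ := habs _ _ e3
      obtain ⟨e4a, e4b⟩ := habs _ _ e4
      constructor <;> [nlinarith; nlinarith]
    have h := dCb_tail N (show (0:ℝ) ≤ δ / 2 by positivity)
      (show (0:ℝ) ≤ 2 * b by linarith) hloc hglob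
    calc dCb (GG J t φ) (GG J t ψ) ≤ δ / 2 + 2 * b * (1 / 2) ^ N := h
      _ ≤ δ / 2 + δ / 2 := by linarith
      _ = δ := by ring

end NET

lemma kuratD_le_of_cover {X : Type*} (d : X → X → ℝ) (A : Set X) (ε : ℝ≥0∞)
    (ι : Type) [Fintype ι] (C : ι → Set X) (hcov : A ⊆ ⋃ i, C i)
    (hdiam : ∀ i, ∀ x ∈ C i, ∀ y ∈ C i, ENNReal.ofReal (d x y) ≤ ε) :
    kuratD d A ≤ ε := by
  refine sInf_le ⟨Fintype.card ι, fun n => C ((Fintype.equivFin ι).symm n), ?_,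
    fun i => hdiam _⟩
  intro x hx
  obtain ⟨i, hi⟩ := Set.mem_iUnion.mp (hcov hx)
  exact Set.mem_iUnion.mpr ⟨Fintype.equivFin ι i, by simpa using hi⟩

/-- Lemma 1: for each `t > 0` and every `U ⊆ C_b`,
`α(T(t)U) ≤ e^{−t} α(U)` with `α` the Kuratowski measure of noncompactness in
`(C_b, d)`; i.e. `T(t)` is an `α`-contraction with coefficient `e^{−t}`. -/
theorem stmt_9 (J : ℝ → ℝ) (hJ0 : ∀ y, 0 ≤ J y) (hJi : Integrable J)
    (hJ1 : ∫ y, J y = 1) (b : ℝ) (hb : 0 < b)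
    (t : ℝ) (ht : 0 < t) (U : Set (ℝ → ℝ))
    (hU : ∀ φ ∈ U, Continuous φ ∧ ∀ x, φ x ∈ Set.Icc 0 b) :
    kuratD dCb ((fun φ => Tmap J t φ) '' U) ≤
      ENNReal.ofReal (Real.exp (-t)) * kuratD dCb U := by
  set c := Real.exp (-t) with hc
  have hc0 : 0 < c := Real.exp_pos _
  have hc1 : c ≤ 1 := Real.exp_le_one_iff.mpr (by linarith)
  have hcoe0 : ENNReal.ofReal c ≠ 0 := by
    simp [ENNReal.ofReal_eq_zero, not_le, hc0]
  have hcoe1 : ENNReal.ofReal c ≤ 1 := ENNReal.ofReal_le_one.mpr hc1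
  have hcoetop : ENNReal.ofReal c ≠ ⊤ := ENNReal.ofReal_ne_top
  set S := {ε : ℝ≥0∞ | ∃ (n : ℕ) (C : Fin n → Set (ℝ → ℝ)), U ⊆ ⋃ i, C i ∧
    ∀ i, ∀ x ∈ C i, ∀ y ∈ C i, ENNReal.ofReal (dCb x y) ≤ ε} with hS
  have hkU : kuratD dCb U = sInf S := rfl
  -- main step
  have main : ∀ ε ∈ S, ∀ δ : ℝ, 0 < δ →
      kuratD dCb ((fun φ => Tmap J t φ) '' U)
        ≤ ENNReal.ofReal c * ε + ENNReal.ofReal δ := by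
    rintro ε ⟨n, C, hcov, hdiam⟩ δ hδ
    obtain ⟨ι, hιF, B, hBcov, hBdiam⟩ := GG_net hJ0 hJi hJ1 hb ht.le U hU hδ
    refine kuratD_le_of_cover dCb _ _ (Fin n × ι)
      (fun iσ => (fun φ => Tmap J t φ) ''
        {φ | φ ∈ U ∧ φ ∈ C iσ.1 ∧ GG J t φ ∈ B iσ.2}) ?_ ?_
    · rintro _ ⟨φ, hφU, rfl⟩
      obtain ⟨i, hi⟩ := Set.mem_iUnion.mp (hcov hφU)
      obtain ⟨σ, hσ⟩ := hBcov φ hφU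
      exact Set.mem_iUnion.mpr ⟨(i, σ), Set.mem_image_of_mem _ ⟨hφU, hi, hσ⟩⟩
    · rintro ⟨i, σ⟩ _ ⟨φ, ⟨hφU, hφC, hφB⟩, rfl⟩ _ ⟨ψ, ⟨hψU, hψC, hψB⟩, rfl⟩
      obtain ⟨hφc, hφb⟩ := hU φ hφU
      obtain ⟨hψc, hψb⟩ := hU ψ hψU
      have d1 := dCb_split ht.le hb.le hJ0 hJi hJ1 hφc hφb hψc hψb
      have d2 := hBdiam σ _ hφB _ hψB
      have d3 : dCb (Tmap J t φ) (Tmap J t ψ) ≤ c * dCb φ ψ + δ := by linarith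
      calc ENNReal.ofReal (dCb (Tmap J t φ) (Tmap J t ψ))
          ≤ ENNReal.ofReal (c * dCb φ ψ + δ) := ENNReal.ofReal_le_ofReal d3
        _ ≤ ENNReal.ofReal (c * dCb φ ψ) + ENNReal.ofReal δ := ENNReal.ofReal_add_le
        _ = ENNReal.ofReal c * ENNReal.ofReal (dCb φ ψ) + ENNReal.ofReal δ := by
            rw [ENNReal.ofReal_mul hc0.le]
        _ ≤ ENNReal.ofReal c * ε + ENNReal.ofReal δ := by
            exact add_le_add_left (mul_le_mul_right (hdiam i φ hφC ψ hψC) _) _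
  -- remove δ
  have main2 : ∀ ε ∈ S, kuratD dCb ((fun φ => Tmap J t φ) '' U) ≤ ENNReal.ofReal c * ε := by
    intro ε hε
    by_cases hεtop : ε = ⊤
    · rw [hεtop, ENNReal.mul_top hcoe0]
      exact le_top
    · refine ENNReal.le_of_forall_pos_le_add fun η hη _ => ?_
      have hmain := main ε hε η (by exact_mod_cast hη)
      rwa [ENNReal.ofReal_coe_nnreal] at hmain
  -- conclude
  rw [hkU]
  by_cases hstop : sInf S = ⊤
  · rw [hstop, ENNReal.mul_top hcoe0]
    exact le_top
  · refine ENNReal.le_of_forall_pos_le_add fun η hη hlt => ?_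
    have hηne : (η : ℝ≥0∞) ≠ 0 := by exact_mod_cast hη.ne'
    have hlt2 : sInf S < sInf S + η := ENNReal.lt_add_right hstop hηne
    obtain ⟨ε, hεS, hεlt⟩ := sInf_lt_iff.mp hlt2
    calc kuratD dCb ((fun φ => Tmap J t φ) '' U)
        ≤ ENNReal.ofReal c * ε := main2 ε hεS
      _ ≤ ENNReal.ofReal c * (sInf S + η) := mul_le_mul_right hεlt.le _
      _ = ENNReal.ofReal c * sInf S + ENNReal.ofReal c * η := by rw [mul_add]
      _ ≤ ENNReal.ofReal c * sInf S + η := by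
          refine add_le_add_right ?_ _
          calc ENNReal.ofReal c * η ≤ 1 * η := mul_le_mul_left hcoe1 _
            _ = η := one_mul _
end

section
/- (Lemma 3) Let a < b' be real numbers and X a Banach space. Let B ⊂ C([a,b'],X) be a bounded set that is equicontinuous on [a,b'], and define B(s) = {g(s) : g ∈ B} ⊆ X for s ∈ [a,b'] and ∫_a^{b'} B(s) ds = {∫_a^{b'} g(s) ds : g ∈ B} ⊆ X. Then α(∫_a^{b'} B(s) ds) ≤ ∫_a^{b'} α(B(s)) ds, where α denotes the Kuratowski measure of noncompactness (in X on both sides). -/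
open MeasureTheory Real Set
open scoped ENNReal Pointwise

/-- The Kuratowski measure of noncompactness: the infimum (in `ℝ≥0∞`, so `∞` if no
such cover exists) of all `ε` such that `A` admits a finite cover by sets of
diameter at most `ε`. -/
noncomputable def kurat {X : Type*} [PseudoEMetricSpace X] (A : Set X) : ℝ≥0∞ :=
  sInf {ε : ℝ≥0∞ | ∃ (n : ℕ) (C : Fin n → Set X), A ⊆ ⋃ i, C i ∧
    ∀ i, EMetric.diam (C i) ≤ ε}

lemma kurat_mono {X : Type*} [PseudoEMetricSpace X] {A A' : Set X} (h : A ⊆ A') :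
    kurat A ≤ kurat A' := by
  apply sInf_le_sInf
  rintro ε ⟨n, C, hC, hd⟩
  exact ⟨n, C, h.trans hC, hd⟩

lemma kurat_le_diam {X : Type*} [PseudoEMetricSpace X] (A : Set X) :
    kurat A ≤ EMetric.diam A :=
  sInf_le ⟨1, fun _ => A, by rw [iUnion_const], fun _ => le_rfl⟩

lemma kurat_le_of_approx {X : Type*} [PseudoEMetricSpace X] {A A' : Set X} {r : ℝ≥0∞}
    (h : ∀ x ∈ A, ∃ y ∈ A', edist x y ≤ r) : kurat A ≤ kurat A' + 2 * r := by
  conv_lhs => rw [kurat]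
  rw [show kurat A' + 2 * r = ⨅ ε ∈ {ε : ℝ≥0∞ | ∃ (n : ℕ) (C : Fin n → Set X),
      A' ⊆ ⋃ i, C i ∧ ∀ i, EMetric.diam (C i) ≤ ε}, (ε + 2 * r) from by
        rw [kurat]; exact ENNReal.sInf_add]
  refine le_iInf₂ fun ε hε => ?_
  obtain ⟨n, C, hC, hd⟩ := hε
  refine sInf_le ⟨n, fun i => {x | ∃ y ∈ C i, edist x y ≤ r}, ?_, ?_⟩
  · intro x hx
    obtain ⟨y, hy, hxy⟩ := h x hx
    obtain ⟨s, ⟨i, rfl⟩, hys⟩ := hC hy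
    exact mem_iUnion.2 ⟨i, ⟨y, hys, hxy⟩⟩
  · intro i
    refine EMetric.diam_le ?_
    rintro x ⟨y, hy, hxy⟩ x' ⟨y', hy', hxy'⟩
    calc edist x x' ≤ edist x y + edist y y' + edist y' x' := edist_triangle4 x y y' x'
      _ ≤ r + EMetric.diam (C i) + r := by
          gcongr
          · exact EMetric.edist_le_diam_of_mem hy hy'
          · rw [edist_comm]; exact hxy'
      _ ≤ r + ε + r := by gcongr; exact hd i
      _ = ε + 2 * r := by ring

lemma kurat_add_le {X : Type*} [SeminormedAddCommGroup X] (A A' : Set X) :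
    kurat (A + A') ≤ kurat A + kurat A' := by
  rw [show kurat A + kurat A' = ⨅ ε ∈ {ε : ℝ≥0∞ | ∃ (n : ℕ) (C : Fin n → Set X),
      A ⊆ ⋃ i, C i ∧ ∀ i, EMetric.diam (C i) ≤ ε}, (ε + kurat A') from by
        rw [kurat]; exact ENNReal.sInf_add]
  refine le_iInf₂ fun ε hε => ?_
  rw [show ε + kurat A' = ⨅ ε' ∈ {ε' : ℝ≥0∞ | ∃ (n : ℕ) (C : Fin n → Set X),
      A' ⊆ ⋃ i, C i ∧ ∀ i, EMetric.diam (C i) ≤ ε'}, (ε' + ε) from by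
        rw [add_comm, kurat, ENNReal.sInf_add]]
  refine le_iInf₂ fun ε' hε' => ?_
  obtain ⟨n, C, hC, hd⟩ := hε
  obtain ⟨m, D, hD, hd'⟩ := hε'
  refine le_trans (sInf_le ⟨n * m, fun i => C (finProdFinEquiv.symm i).1 +
    D (finProdFinEquiv.symm i).2, ?_, ?_⟩) le_rfl
  · rintro z ⟨x, hx, y, hy, rfl⟩
    obtain ⟨s, ⟨i, rfl⟩, hxs⟩ := hC hx
    obtain ⟨s, ⟨j, rfl⟩, hys⟩ := hD hy
    refine mem_iUnion.2 ⟨finProdFinEquiv (i, j), ?_⟩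
    simpa using ⟨x, hxs, y, hys, rfl⟩
  · intro i
    refine le_trans (EMetric.diam_le ?_) le_rfl
    rintro z ⟨x, hx, y, hy, rfl⟩ z' ⟨x', hx', y', hy', rfl⟩
    calc edist (x + y) (x' + y') ≤ edist x x' + edist y y' := edist_add_add_le x y x' y'
      _ ≤ ε + ε' := by
          gcongr
          · exact le_trans (EMetric.edist_le_diam_of_mem hx hx') (hd (finProdFinEquiv.symm i).1)
          · exact le_trans (EMetric.edist_le_diam_of_mem hy hy') (hd' (finProdFinEquiv.symm i).2)
      _ = ε' + ε := add_comm _ _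

lemma kurat_smul_le {X : Type*} [NormedAddCommGroup X] [NormedSpace ℝ X] {c : ℝ} (hc : 0 < c)
    (A : Set X) : kurat (c • A) ≤ ENNReal.ofReal c * kurat A := by
  conv_rhs => rw [kurat, sInf_eq_iInf']
  rw [ENNReal.mul_iInf_of_ne (ENNReal.ofReal_pos.2 hc).ne' ENNReal.ofReal_ne_top]
  refine le_iInf fun ε => ?_
  obtain ⟨n, C, hC, hd⟩ := ε.2
  refine sInf_le ⟨n, fun i => c • C i, ?_, fun i => ?_⟩
  · rw [← smul_set_iUnion]
    exact smul_set_mono hC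
  · refine EMetric.diam_le ?_
    rintro z ⟨x, hx, rfl⟩ z' ⟨x', hx', rfl⟩
    rw [edist_smul₀, ENNReal.smul_def, smul_eq_mul, ← Real.enorm_eq_ofReal hc.le, ← enorm_eq_nnnorm]
    gcongr
    exact le_trans (EMetric.edist_le_diam_of_mem hx hx') (hd i)

lemma kurat_riemann_le {X : Type*} [NormedAddCommGroup X] [NormedSpace ℝ X]
    {ι : Type*} (B : Set ι) {h : ℝ} (hh : 0 < h) (f : ι → ℕ → X) (k : ℕ) :
    kurat {x | ∃ g ∈ B, x = ∑ i ∈ Finset.range k, h • f g i} ≤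
      ∑ i ∈ Finset.range k, ENNReal.ofReal h * kurat ((fun g => f g i) '' B) := by
  induction k with
  | zero =>
    simp only [Finset.range_zero, Finset.sum_empty]
    refine le_trans (kurat_mono (A' := {(0 : X)}) ?_) ?_
    · rintro x ⟨g, hg, rfl⟩; simp
    · exact le_trans (kurat_le_diam {(0 : X)}) (le_of_eq EMetric.diam_singleton)
  | succ k ih =>
    refine le_trans (kurat_mono (A' := {x | ∃ g ∈ B, x = ∑ i ∈ Finset.range k, h • f g i}
        + h • ((fun g => f g k) '' B)) ?_) ?_
    · rintro x ⟨g, hg, rfl⟩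
      rw [Finset.sum_range_succ]
      exact ⟨_, ⟨g, hg, rfl⟩, _, ⟨f g k, ⟨g, hg, rfl⟩, rfl⟩, rfl⟩
    · refine le_trans (kurat_add_le _ _) ?_
      rw [Finset.sum_range_succ]
      exact add_le_add ih (kurat_smul_le hh _)

/-- Lebesgue measure on the subtype `[a,b'] ⊆ ℝ`. -/
noncomputable def iccVolume (a b' : ℝ) : Measure (Set.Icc a b') :=
  (volume : Measure ℝ).comap Subtype.val

/-- Lemma 3: for `a < b'`, a Banach space `X`, and a bounded
equicontinuous set `B ⊆ C([a,b'], X)`,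
`α(∫_a^{b'} B(s) ds) ≤ ∫_a^{b'} α(B(s)) ds`. -/
theorem stmt_11 {X : Type*} [NormedAddCommGroup X] [NormedSpace ℝ X] [CompleteSpace X]
    (a b' : ℝ) (hab : a < b') (B : Set C(Set.Icc a b', X))
    (hbd : Bornology.IsBounded B)
    (heq : ∀ ε > (0 : ℝ), ∃ δ > (0 : ℝ), ∀ s s' : Set.Icc a b',
      |(s : ℝ) - (s' : ℝ)| < δ → ∀ g ∈ B, ‖g s - g s'‖ < ε) :
    kurat {v : X | ∃ g ∈ B, v = ∫ s, g s ∂(iccVolume a b')} ≤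
      ∫⁻ s, kurat ((fun g : C(Set.Icc a b', X) => g s) '' B) ∂(iccVolume a b') := by
  refine ENNReal.le_of_forall_pos_le_add fun η hη _ => ?_
  set I := ∫⁻ s, kurat ((fun g : C(Set.Icc a b', X) => g s) '' B) ∂(iccVolume a b') with hIdef
  have hba : (0:ℝ) < b' - a := sub_pos.2 hab
  set ε : ℝ := η / (4 * (b' - a)) with hεdef
  have hε0 : 0 < ε := div_pos (NNReal.coe_pos.2 hη) (by linarith)
  obtain ⟨δ, hδ0, hδ⟩ := heq ε hε0
  obtain ⟨n, hn⟩ := exists_nat_gt ((b' - a) / δ)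
  have hn0 : 0 < (n:ℝ) := lt_trans (div_pos hba hδ0) hn
  set h : ℝ := (b' - a) / n with hhdef
  have hh0 : 0 < h := div_pos hba hn0
  have hhδ : h < δ := by
    rw [div_lt_iff₀ hn0]
    have := (div_lt_iff₀ hδ0).1 hn
    linarith [mul_comm δ (n:ℝ)]
  set t : ℕ → ℝ := fun i => a + i * h with htdef
  have ht0 : t 0 = a := by simp [htdef]
  have htn : t n = b' := by
    rw [htdef, hhdef]; field_simp; ring
  have htsucc : ∀ i, t (i+1) = t i + h := by
    intro i; simp only [htdef]; push_cast; ring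
  have hmono : Monotone t := monotone_nat_of_le_succ fun i => by rw [htsucc]; linarith
  have hmem : ∀ i ≤ n, t i ∈ Set.Icc a b' := by
    intro i hi
    constructor
    · rw [← ht0]; exact hmono (Nat.zero_le i)
    · rw [← htn]; exact hmono hi
  set P : ℝ → Set.Icc a b' := projIcc a b' hab.le with hPdef
  set ξ : ℕ → Set.Icc a b' := fun i => P (t i) with hξdef
  have hξ : ∀ i ≤ n, (ξ i : ℝ) = t i := by
    intro i hi
    exact congrArg Subtype.val (projIcc_of_mem hab.le (hmem i hi))
  -- Claim A : Riemann sum approximation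
  have claimA : ∀ g ∈ B,
      ‖(∫ s, g s ∂(iccVolume a b')) - ∑ i ∈ Finset.range n, h • g (ξ i)‖ ≤ ε * (b' - a) := by
    intro g hg
    set G : ℝ → X := fun x => g (P x) with hGdef
    have hGc : Continuous G := g.continuous.comp continuous_projIcc
    have h1 : (∫ s, g s ∂(iccVolume a b')) = ∫ x in Set.Icc a b', G x := by
      rw [iccVolume, show (fun s : Set.Icc a b' => g s) = fun s : Set.Icc a b' => G ↑s from
        funext fun s => by rw [hGdef]; simp [hPdef, projIcc_val]]
      exact integral_subtype_comap measurableSet_Icc G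
    have h2 : ∫ x in Set.Icc a b', G x = ∫ x in a..b', G x := by
      rw [intervalIntegral.integral_of_le hab.le, integral_Icc_eq_integral_Ioc]
    have h3 : ∫ x in a..b', G x = ∑ i ∈ Finset.range n, ∫ x in t i..t (i+1), G x := by
      rw [intervalIntegral.sum_integral_adjacent_intervals
        (fun k _ => hGc.intervalIntegrable _ _), ht0, htn]
    have h4 : ∀ i ∈ Finset.range n, ‖(∫ x in t i..t (i+1), G x) - h • g (ξ i)‖ ≤ ε * h := by
      intro i hi
      rw [Finset.mem_range] at hi
      have hle : t i ≤ t (i+1) := hmono (Nat.le_succ i)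
      have hconst : h • g (ξ i) = ∫ _ in t i..t (i+1), g (ξ i) := by
        rw [intervalIntegral.integral_const, htsucc]; congr 1; ring
      rw [hconst, ← intervalIntegral.integral_sub (hGc.intervalIntegrable _ _)
        intervalIntegrable_const]
      have hb := intervalIntegral.norm_integral_le_of_norm_le_const
        (C := ε) (f := fun x => G x - g (ξ i)) (a := t i) (b := t (i+1)) ?_
      · calc ‖∫ x in t i..t (i+1), (G x - g (ξ i))‖ ≤ ε * |t (i+1) - t i| := hb
          _ = ε * h := by rw [htsucc]; rw [show t i + h - t i = h by ring, abs_of_pos hh0]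
      · intro x hx
        rw [uIoc_of_le hle] at hx
        have hxI : x ∈ Set.Icc a b' := by
          constructor
          · calc a = t 0 := ht0.symm
              _ ≤ t i := hmono (Nat.zero_le i)
              _ ≤ x := hx.1.le
          · calc x ≤ t (i+1) := hx.2
              _ ≤ t n := hmono hi
              _ = b' := htn
        have hPx : (P x : ℝ) = x := by rw [hPdef, projIcc_of_mem _ hxI]
        have : ‖g (P x) - g (ξ i)‖ < ε := by
          apply hδ _ _ _ g hg
          rw [hPx, hξ i hi.le]
          rw [abs_of_pos (by linarith [hx.1])]
          have := hx.2
          rw [htsucc] at this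
          linarith
        exact this.le
    calc ‖(∫ s, g s ∂(iccVolume a b')) - ∑ i ∈ Finset.range n, h • g (ξ i)‖
        = ‖∑ i ∈ Finset.range n, ((∫ x in t i..t (i+1), G x) - h • g (ξ i))‖ := by
          rw [h1, h2, h3, Finset.sum_sub_distrib]
      _ ≤ ∑ i ∈ Finset.range n, ‖(∫ x in t i..t (i+1), G x) - h • g (ξ i)‖ :=
          norm_sum_le _ _
      _ ≤ ∑ _i ∈ Finset.range n, ε * h := Finset.sum_le_sum h4
      _ = n * (ε * h) := by rw [Finset.sum_const, Finset.card_range, nsmul_eq_mul]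
      _ = ε * (b' - a) := by rw [hhdef]; field_simp
  -- Transfer the RHS lintegral to ℝ
  set F : ℝ → ℝ≥0∞ := fun x => kurat ((fun g : C(Set.Icc a b', X) => g (P x)) '' B) with hFdef
  have hI : I = ∫⁻ x in Set.Icc a b', F x := by
    rw [hIdef, iccVolume, show (fun s : Set.Icc a b' =>
        kurat ((fun g : C(Set.Icc a b', X) => g s) '' B)) = fun s : Set.Icc a b' => F ↑s from
      funext fun s => by simp [hFdef, hPdef, projIcc_val]]
    exact lintegral_subtype_comap measurableSet_Icc F
  -- Claim C : sum bounded by integral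
  have hstep : ∀ i < n, ENNReal.ofReal h * kurat ((fun g : C(Set.Icc a b', X) => g (ξ i)) '' B) ≤
      (∫⁻ x in Set.Ico (t i) (t (i+1)), F x) + (2 * ENNReal.ofReal ε) * ENNReal.ofReal h := by
    intro i hi
    have hpt : ∀ x ∈ Set.Ico (t i) (t (i+1)),
        kurat ((fun g : C(Set.Icc a b', X) => g (ξ i)) '' B) ≤ F x + 2 * ENNReal.ofReal ε := by
      intro x hx
      have hxI : x ∈ Set.Icc a b' := by
        constructor
        · calc a = t 0 := ht0.symm
            _ ≤ t i := hmono (Nat.zero_le i)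
            _ ≤ x := hx.1
        · calc x ≤ t (i+1) := hx.2.le
            _ ≤ t n := hmono hi
            _ = b' := htn
      refine kurat_le_of_approx ?_
      rintro _ ⟨g, hg, rfl⟩
      refine ⟨g (P x), ⟨g, hg, rfl⟩, ?_⟩
      rw [edist_le_ofReal hε0.le, dist_eq_norm]
      refine (hδ _ _ ?_ g hg).le
      rw [hξ i hi.le, hPdef, projIcc_of_mem _ hxI]
      rw [abs_sub_comm, abs_of_nonneg (by linarith [hx.1])]
      have := hx.2
      rw [htsucc] at this
      linarith
    have hvol : volume (Set.Ico (t i) (t (i+1))) = ENNReal.ofReal h := by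
      rw [Real.volume_Ico, htsucc]; congr 1; ring
    calc ENNReal.ofReal h * kurat ((fun g : C(Set.Icc a b', X) => g (ξ i)) '' B)
        = ∫⁻ _ in Set.Ico (t i) (t (i+1)),
            kurat ((fun g : C(Set.Icc a b', X) => g (ξ i)) '' B) := by
          rw [setLIntegral_const, hvol, mul_comm]
      _ ≤ ∫⁻ x in Set.Ico (t i) (t (i+1)), (F x + 2 * ENNReal.ofReal ε) :=
          lintegral_mono_ae ((ae_restrict_iff' measurableSet_Ico).2
            (Filter.Eventually.of_forall hpt))
      _ = (∫⁻ x in Set.Ico (t i) (t (i+1)), F x) + (2 * ENNReal.ofReal ε) * ENNReal.ofReal h := by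
          rw [lintegral_add_right' _ aemeasurable_const, setLIntegral_const, hvol]
  have hunion : ∀ k, (∑ i ∈ Finset.range k, ∫⁻ x in Set.Ico (t i) (t (i+1)), F x)
      = ∫⁻ x in Set.Ico (t 0) (t k), F x := by
    intro k
    induction k with
    | zero => simp
    | succ k ih =>
      rw [Finset.sum_range_succ, ih,
        ← lintegral_union measurableSet_Ico (Set.Ico_disjoint_Ico_same),
        Set.Ico_union_Ico_eq_Ico (hmono (Nat.zero_le k)) (hmono (Nat.le_succ k))]
  have hC : (∑ i ∈ Finset.range n,
      ENNReal.ofReal h * kurat ((fun g : C(Set.Icc a b', X) => g (ξ i)) '' B))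
      ≤ I + ENNReal.ofReal (2 * ε * (b' - a)) := by
    calc (∑ i ∈ Finset.range n,
        ENNReal.ofReal h * kurat ((fun g : C(Set.Icc a b', X) => g (ξ i)) '' B))
        ≤ ∑ i ∈ Finset.range n, ((∫⁻ x in Set.Ico (t i) (t (i+1)), F x)
            + (2 * ENNReal.ofReal ε) * ENNReal.ofReal h) :=
          Finset.sum_le_sum fun i hi => hstep i (Finset.mem_range.1 hi)
      _ = (∫⁻ x in Set.Ico (t 0) (t n), F x)
            + n * ((2 * ENNReal.ofReal ε) * ENNReal.ofReal h) := by
          rw [Finset.sum_add_distrib, hunion, Finset.sum_const, Finset.card_range, nsmul_eq_mul]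
      _ ≤ I + ENNReal.ofReal (2 * ε * (b' - a)) := by
          gcongr
          · rw [hI, ht0, htn]
            exact lintegral_mono_set Set.Ico_subset_Icc_self
          · rw [← ENNReal.ofReal_ofNat, ← ENNReal.ofReal_mul (by norm_num),
              ← ENNReal.ofReal_mul (by positivity), ← ENNReal.ofReal_natCast,
              ← ENNReal.ofReal_mul (by positivity)]
            apply ENNReal.ofReal_le_ofReal
            rw [hhdef]
            field_simp
            exact le_rfl
  -- Final assembly
  have hRS : kurat {v : X | ∃ g ∈ B, v = ∫ s, g s ∂(iccVolume a b')} ≤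
      (∑ i ∈ Finset.range n,
        ENNReal.ofReal h * kurat ((fun g : C(Set.Icc a b', X) => g (ξ i)) '' B))
      + 2 * ENNReal.ofReal (ε * (b' - a)) := by
    refine le_trans (kurat_le_of_approx (r := ENNReal.ofReal (ε * (b' - a))) (A' := {x : X | ∃ g ∈ B,
        x = ∑ i ∈ Finset.range n, h • g (ξ i)}) ?_) ?_
    · rintro v ⟨g, hg, rfl⟩
      refine ⟨∑ i ∈ Finset.range n, h • g (ξ i), ⟨g, hg, rfl⟩, ?_⟩
      rw [edist_le_ofReal (by positivity), dist_eq_norm]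
      exact claimA g hg
    · gcongr
      exact kurat_riemann_le B hh0 (fun g i => g (ξ i)) n
  calc kurat {v : X | ∃ g ∈ B, v = ∫ s, g s ∂(iccVolume a b')}
      ≤ (∑ i ∈ Finset.range n,
          ENNReal.ofReal h * kurat ((fun g : C(Set.Icc a b', X) => g (ξ i)) '' B))
        + 2 * ENNReal.ofReal (ε * (b' - a)) := hRS
    _ ≤ I + ENNReal.ofReal (2 * ε * (b' - a)) + 2 * ENNReal.ofReal (ε * (b' - a)) := by
        gcongr
    _ = I + ENNReal.ofReal (4 * ε * (b' - a)) := by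
        rw [← ENNReal.ofReal_ofNat, ← ENNReal.ofReal_mul (by norm_num), add_assoc,
          ← ENNReal.ofReal_add (by positivity) (by positivity)]
        congr 1
        ring_nf
    _ = I + η := by
        congr 1
        rw [hεdef]
        rw [show 4 * (↑η / (4 * (b' - a))) * (b' - a) = (η : ℝ) from by field_simp]
        exact ENNReal.ofReal_coe_nnreal
end
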